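/- For any nonempty subset T ⊆ S and any orthonormal basis {|j⟩}_{j=1}^{2^N} of (ℂ²)^{⊗N}, the average over |ψ⟩ ∈ T of Σ_{j=1}^{2^N} |⟨j|ψ⟩|⁴ is at most (6^N/|T|)·(2/3)^N = 4^N/|T|. In particular, if |T| ≥ 6^{N(1−δ)} with constant δ > 0 satisfying (2/3)·6^δ < 1, then (1/|T|) Σ_{|ψ⟩∈T} 1/D^eff_ψ ≤ ((2/3)·6^δ)^N. -/

import Mathlib

open scoped Matrix ComplexConjugate

/-- The six single-qubit states `|x^±⟩, |y^±⟩, |z^±⟩`: unit eigenvectors of the Pauli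
matrices `σˣ, σʸ, σᶻ` with eigenvalues `±1`. -/
noncomputable def qs : Fin 6 → Fin 2 → ℂ
  | 0 => ![(Real.sqrt 2 : ℂ)⁻¹, (Real.sqrt 2 : ℂ)⁻¹]
  | 1 => ![(Real.sqrt 2 : ℂ)⁻¹, -(Real.sqrt 2 : ℂ)⁻¹]
  | 2 => ![(Real.sqrt 2 : ℂ)⁻¹, Complex.I * (Real.sqrt 2 : ℂ)⁻¹]
  | 3 => ![(Real.sqrt 2 : ℂ)⁻¹, -(Complex.I * (Real.sqrt 2 : ℂ)⁻¹)]
  | 4 => ![1, 0]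
  | 5 => ![0, 1]

/-- The product state `⊗_i |f i⟩ ∈ (ℂ²)^{⊗N}`; as `f` ranges over `Fin N → Fin 6`,
these are exactly the `6^N` elements of `S`. -/
noncomputable def prodState {N : ℕ} (f : Fin N → Fin 6) : (Fin N → Fin 2) → ℂ :=
  fun x => ∏ i, qs (f i) (x i)



lemma qs_moment (a b c d : Fin 2) :
    ∑ s : Fin 6, qs s a * conj (qs s b) * (qs s c * conj (qs s d))
    = (if a = b then 1 else 0) * (if c = d then 1 else 0)
    + (if a = d then 1 else 0) * (if c = b then 1 else 0) := by
  have hr : ((Real.sqrt 2 : ℝ) : ℂ) ^ 2 = 2 := by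
    rw [← Complex.ofReal_pow, Real.sq_sqrt (by norm_num)]; norm_num
  have hr0 : ((Real.sqrt 2 : ℝ) : ℂ) ≠ 0 := by
    simp [Real.sqrt_eq_zero']
  fin_cases a <;> fin_cases b <;> fin_cases c <;> fin_cases d <;>
    simp only [qs, Fin.sum_univ_six, Matrix.cons_val_zero, Matrix.cons_val_one, Matrix.head_cons,
      map_inv₀, map_mul, map_neg, Complex.conj_ofReal, Complex.conj_I, Fin.isValue] <;>
    norm_num <;> field_simp <;>
    first
      | linear_combination (2 : ℂ) * hr
      | linear_combination (-((Real.sqrt 2 : ℝ) : ℂ) ^ 2 - 4) * hr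
      | linear_combination (((Real.sqrt 2 : ℝ) : ℂ) ^ 2 + 4) * hr
      | linear_combination (-2 : ℂ) * hr
      | linear_combination hr
      | linear_combination -hr
      | linear_combination (-((Real.sqrt 2 : ℝ) : ℂ) ^ 2 - 2) * hr
      | linear_combination (((Real.sqrt 2 : ℝ) : ℂ) ^ 2 + 2) * hr
      | linear_combination (2 : ℂ) * Complex.I_sq
      | linear_combination (-2 : ℂ) * Complex.I_sq - (((Real.sqrt 2 : ℝ) : ℂ) ^ 2 + 2) * hr
      | linear_combination (2 : ℂ) * Complex.I_pow_four - (((Real.sqrt 2 : ℝ) : ℂ) ^ 2 + 2) * hr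
      | ring

/-- merge along a subset -/
def mg {N : ℕ} (t : Finset (Fin N)) (a b : Fin N → Fin 2) : Fin N → Fin 2 :=
  fun i => if i ∈ t then a i else b i

lemma mg_invol {N : ℕ} (t : Finset (Fin N)) (a b : Fin N → Fin 2) :
    mg t (mg t a b) (mg t b a) = a := by
  funext i; by_cases h : i ∈ t <;> simp [mg, h]

lemma prodIndicator2 {N : ℕ} (u y : Fin N → Fin 2) :
    (∏ i, (if u i = y i then (1 : ℂ) else 0)) = if u = y then 1 else 0 := by
  by_cases h : u = y
  · simp [h]
  · rw [if_neg h]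
    obtain ⟨i, hi⟩ := Function.ne_iff.mp h
    exact Finset.prod_eq_zero (Finset.mem_univ i) (if_neg hi)

lemma swap5 {N : ℕ} {γ : Type*} (s : Finset γ)
    (F : (Fin N → Fin 2) → (Fin N → Fin 2) → (Fin N → Fin 2) → (Fin N → Fin 2) → γ → ℂ) :
    (∑ x, ∑ x', ∑ y, ∑ y', ∑ t ∈ s, F x x' y y' t)
    = ∑ t ∈ s, ∑ x, ∑ x', ∑ y, ∑ y', F x x' y y' t := by
  calc (∑ x, ∑ x', ∑ y, ∑ y', ∑ t ∈ s, F x x' y y' t)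
      = ∑ x, ∑ x', ∑ y, ∑ t ∈ s, ∑ y', F x x' y y' t := by
        exact Finset.sum_congr rfl fun x _ => Finset.sum_congr rfl fun x' _ =>
          Finset.sum_congr rfl fun y _ => Finset.sum_comm
    _ = ∑ x, ∑ x', ∑ t ∈ s, ∑ y, ∑ y', F x x' y y' t := by
        exact Finset.sum_congr rfl fun x _ => Finset.sum_congr rfl fun x' _ => Finset.sum_comm
    _ = ∑ x, ∑ t ∈ s, ∑ x', ∑ y, ∑ y', F x x' y y' t := by
        exact Finset.sum_congr rfl fun x _ => Finset.sum_comm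
    _ = _ := Finset.sum_comm

abbrev Vn (N : ℕ) := Fin N → Fin 2

lemma core (N : ℕ) (v : (Fin N → Fin 2) → ℂ) (hv : ∑ x, ‖v x‖ ^ 2 = 1) :
    ∑ f : Fin N → Fin 6, ‖∑ x, conj (v x) * prodState f x‖ ^ 4 ≤ 2 ^ N := by
  classical
  -- step A : norm fourth power as real part
  have habs : ∀ z : ℂ, ‖z‖ ^ 4 = ((z * conj z) ^ 2).re := by
    intro z
    have h1 : ((z * conj z) ^ 2).re = (Complex.normSq z) ^ 2 := by
      rw [Complex.mul_conj, ← Complex.ofReal_pow, Complex.ofReal_re]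
    rw [h1, Complex.normSq_eq_norm_sq]; ring
  have hre : (∑ f : Fin N → Fin 6, ‖∑ x, conj (v x) * prodState f x‖ ^ 4)
      = (∑ f : Fin N → Fin 6,
          ((∑ x, conj (v x) * prodState f x) * conj (∑ x, conj (v x) * prodState f x)) ^ 2).re := by
    rw [Complex.re_sum]
    exact Finset.sum_congr rfl fun f _ => habs _
  rw [hre]
  -- step B : expand to quadruple sum
  have e1 : ∀ f : Fin N → Fin 6,
      ((∑ x, conj (v x) * prodState f x) * conj (∑ x, conj (v x) * prodState f x)) ^ 2
      = ∑ x, ∑ x', ∑ y, ∑ y',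
          (conj (v x) * v y * (conj (v x') * v y')) *
            ∏ i, (qs (f i) (x i) * conj (qs (f i) (y i)) *
              (qs (f i) (x' i) * conj (qs (f i) (y' i)))) := by
    intro f
    have hconj : conj (∑ x, conj (v x) * prodState f x)
        = ∑ y, v y * conj (prodState f y) := by
      rw [map_sum]; exact Finset.sum_congr rfl fun y _ => by rw [map_mul]; simp
    rw [sq, hconj, Finset.sum_mul_sum, Finset.sum_mul_sum]
    refine Finset.sum_congr rfl fun x _ => Finset.sum_congr rfl fun x' _ => ?_
    rw [Finset.sum_mul_sum]
    refine Finset.sum_congr rfl fun y _ => Finset.sum_congr rfl fun y' _ => ?_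
    simp only [prodState, map_prod]
    rw [show (conj (v x) * ∏ i, qs (f i) (x i)) * (v y * ∏ i, conj (qs (f i) (y i))) *
          ((conj (v x') * ∏ i, qs (f i) (x' i)) * (v y' * ∏ i, conj (qs (f i) (y' i))))
        = (conj (v x) * v y * (conj (v x') * v y')) *
          ((∏ i, qs (f i) (x i)) * (∏ i, conj (qs (f i) (y i))) *
            ((∏ i, qs (f i) (x' i)) * (∏ i, conj (qs (f i) (y' i))))) from by ring]
    congr 1
    simp only [← Finset.prod_mul_distrib]
  -- step C : sum over f
  have e2 : (∑ f : Fin N → Fin 6,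
      ((∑ x, conj (v x) * prodState f x) * conj (∑ x, conj (v x) * prodState f x)) ^ 2)
      = ∑ t ∈ (Finset.univ : Finset (Fin N)).powerset, ∑ x : Vn N, ∑ x' : Vn N,
          conj (v x) * v (mg t x x') * (conj (v x') * v (mg t x' x)) := by
    simp only [e1]
    rw [Finset.sum_comm]
    have hx : ∀ x : Vn N, (∑ f : Fin N → Fin 6, ∑ x', ∑ y, ∑ y',
        (conj (v x) * v y * (conj (v x') * v y')) *
          ∏ i, (qs (f i) (x i) * conj (qs (f i) (y i)) *
            (qs (f i) (x' i) * conj (qs (f i) (y' i)))))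
        = ∑ x' : Vn N, ∑ y, ∑ y', ∑ f : Fin N → Fin 6,
          (conj (v x) * v y * (conj (v x') * v y')) *
            ∏ i, (qs (f i) (x i) * conj (qs (f i) (y i)) *
              (qs (f i) (x' i) * conj (qs (f i) (y' i)))) := by
      intro x
      rw [Finset.sum_comm]
      refine Finset.sum_congr rfl fun x' _ => ?_
      rw [Finset.sum_comm]
      refine Finset.sum_congr rfl fun y _ => Finset.sum_comm
    calc (∑ x : Vn N, ∑ f : Fin N → Fin 6, ∑ x', ∑ y, ∑ y',
        (conj (v x) * v y * (conj (v x') * v y')) *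
          ∏ i, (qs (f i) (x i) * conj (qs (f i) (y i)) *
            (qs (f i) (x' i) * conj (qs (f i) (y' i)))))
        = ∑ x : Vn N, ∑ x' : Vn N, ∑ y, ∑ y',
            (conj (v x) * v y * (conj (v x') * v y')) *
              ∑ t ∈ (Finset.univ : Finset (Fin N)).powerset,
                (∏ i ∈ t, (if x i = y i then (1:ℂ) else 0) * (if x' i = y' i then 1 else 0)) *
                ∏ i ∈ Finset.univ \ t, (if x i = y' i then (1:ℂ) else 0) * (if x' i = y i then 1 else 0) := by
          refine Finset.sum_congr rfl fun x _ => ?_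
          rw [hx x]
          refine Finset.sum_congr rfl fun x' _ => Finset.sum_congr rfl fun y _ =>
            Finset.sum_congr rfl fun y' _ => ?_
          rw [← Finset.mul_sum]
          congr 1
          calc (∑ f : Fin N → Fin 6,
              ∏ i, (qs (f i) (x i) * conj (qs (f i) (y i)) *
                (qs (f i) (x' i) * conj (qs (f i) (y' i)))))
              = ∏ i, ∑ s : Fin 6, (qs s (x i) * conj (qs s (y i)) *
                  (qs s (x' i) * conj (qs s (y' i)))) := by
                rw [Finset.prod_univ_sum]
                rw [Fintype.piFinset_univ]
            _ = ∏ i, ((if x i = y i then (1:ℂ) else 0) * (if x' i = y' i then 1 else 0)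
                  + (if x i = y' i then 1 else 0) * (if x' i = y i then 1 else 0)) :=
                Finset.prod_congr rfl fun i _ => qs_moment _ _ _ _
            _ = _ := Finset.prod_add _ _ _
      _ = ∑ x : Vn N, ∑ x' : Vn N, ∑ y, ∑ y', ∑ t ∈ (Finset.univ : Finset (Fin N)).powerset,
            (conj (v x) * v y * (conj (v x') * v y')) *
              ((∏ i ∈ t, (if x i = y i then (1:ℂ) else 0) * (if x' i = y' i then 1 else 0)) *
                ∏ i ∈ Finset.univ \ t, (if x i = y' i then (1:ℂ) else 0) * (if x' i = y i then 1 else 0)) := by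
          simp only [Finset.mul_sum]
      _ = ∑ t ∈ (Finset.univ : Finset (Fin N)).powerset, ∑ x : Vn N, ∑ x' : Vn N, ∑ y, ∑ y',
            (conj (v x) * v y * (conj (v x') * v y')) *
              ((∏ i ∈ t, (if x i = y i then (1:ℂ) else 0) * (if x' i = y' i then 1 else 0)) *
                ∏ i ∈ Finset.univ \ t, (if x i = y' i then (1:ℂ) else 0) * (if x' i = y i then 1 else 0)) :=
          swap5 _ _
      _ = _ := by
          refine Finset.sum_congr rfl fun t ht => Finset.sum_congr rfl fun x _ =>
            Finset.sum_congr rfl fun x' _ => ?_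
          -- collapse y, y'
          have hkey : ∀ y y' : Vn N,
              (∏ i ∈ t, (if x i = y i then (1:ℂ) else 0) * (if x' i = y' i then 1 else 0)) *
                ∏ i ∈ Finset.univ \ t, (if x i = y' i then (1:ℂ) else 0) * (if x' i = y i then 1 else 0)
              = (if mg t x x' = y then (1:ℂ) else 0) * (if mg t x' x = y' then 1 else 0) := by
            intro y y'
            rw [Finset.prod_mul_distrib, Finset.prod_mul_distrib]
            rw [show (∏ i ∈ t, if x i = y i then (1:ℂ) else 0) *
                  (∏ i ∈ t, if x' i = y' i then (1:ℂ) else 0) *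
                  ((∏ i ∈ Finset.univ \ t, if x i = y' i then (1:ℂ) else 0) *
                    ∏ i ∈ Finset.univ \ t, if x' i = y i then (1:ℂ) else 0)
                = ((∏ i ∈ t, if x i = y i then (1:ℂ) else 0) *
                    ∏ i ∈ Finset.univ \ t, if x' i = y i then (1:ℂ) else 0) *
                  ((∏ i ∈ t, if x' i = y' i then (1:ℂ) else 0) *
                    ∏ i ∈ Finset.univ \ t, if x i = y' i then (1:ℂ) else 0) from by ring]
            congr 1
            · rw [← prodIndicator2 (mg t x x') y, ← Finset.prod_sdiff (Finset.subset_univ t)]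
              rw [mul_comm]
              congr 1
              · exact Finset.prod_congr rfl fun i hi => by
                  simp [mg, (Finset.mem_sdiff.mp hi).2]
              · exact Finset.prod_congr rfl fun i hi => by simp [mg, hi]
            · rw [← prodIndicator2 (mg t x' x) y', ← Finset.prod_sdiff (Finset.subset_univ t)]
              rw [mul_comm]
              congr 1
              · exact Finset.prod_congr rfl fun i hi => by
                  simp [mg, (Finset.mem_sdiff.mp hi).2]
              · exact Finset.prod_congr rfl fun i hi => by simp [mg, hi]
          simp only [hkey]
          rw [show (∑ y : Vn N, ∑ y' : Vn N, (conj (v x) * v y * (conj (v x') * v y')) *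
                ((if mg t x x' = y then (1:ℂ) else 0) * (if mg t x' x = y' then 1 else 0)))
              = ∑ y : Vn N, (if mg t x x' = y then (1:ℂ) else 0) *
                  ∑ y' : Vn N, (if mg t x' x = y' then (1:ℂ) else 0) *
                    (conj (v x) * v y * (conj (v x') * v y')) from by
            refine Finset.sum_congr rfl fun y _ => ?_
            rw [Finset.mul_sum]
            exact Finset.sum_congr rfl fun y' _ => by ring]
          simp
  rw [e2, Complex.re_sum]
  -- step D : bound each term by 1
  have hbound : ∀ t ∈ (Finset.univ : Finset (Fin N)).powerset,
      (∑ x : Vn N, ∑ x' : Vn N,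
        conj (v x) * v (mg t x x') * (conj (v x') * v (mg t x' x))).re ≤ 1 := by
    intro t _
    have h1 : (∑ x : Vn N, ∑ x' : Vn N,
        conj (v x) * v (mg t x x') * (conj (v x') * v (mg t x' x))).re
        ≤ ∑ x : Vn N, ∑ x' : Vn N,
            ‖v x‖ * ‖v (mg t x x')‖ * (‖v x'‖ * ‖v (mg t x' x)‖) := by
      rw [Complex.re_sum]
      refine Finset.sum_le_sum fun x _ => ?_
      rw [Complex.re_sum]
      refine Finset.sum_le_sum fun x' _ => ?_
      refine le_trans (Complex.re_le_norm _) ?_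
      simp only [norm_mul, RCLike.norm_conj]
      exact le_rfl
    have h2 : ∀ x x' : Vn N, ‖v x‖ * ‖v (mg t x x')‖ * (‖v x'‖ * ‖v (mg t x' x)‖)
        ≤ ((‖v x‖ * ‖v x'‖) ^ 2 + (‖v (mg t x x')‖ * ‖v (mg t x' x)‖) ^ 2) / 2 := by
      intro x x'
      nlinarith [sq_nonneg (‖v x‖ * ‖v x'‖ - ‖v (mg t x x')‖ * ‖v (mg t x' x)‖),
        norm_nonneg (v x), norm_nonneg (v x'), norm_nonneg (v (mg t x x')),
        norm_nonneg (v (mg t x' x)), mul_nonneg (norm_nonneg (v x)) (norm_nonneg (v x'))]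
    have hsq1 : ∑ x : Vn N, ∑ x' : Vn N, (‖v x‖ * ‖v x'‖) ^ 2 = 1 := by
      have : ∑ x : Vn N, ∑ x' : Vn N, (‖v x‖ * ‖v x'‖) ^ 2
          = (∑ x : Vn N, ‖v x‖ ^ 2) * ∑ x' : Vn N, ‖v x'‖ ^ 2 := by
        rw [Finset.sum_mul_sum]
        exact Finset.sum_congr rfl fun x _ => Finset.sum_congr rfl fun x' _ => by ring
      rw [this, hv]; ring
    have hsq2 : ∑ x : Vn N, ∑ x' : Vn N, (‖v (mg t x x')‖ * ‖v (mg t x' x)‖) ^ 2 = 1 := by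
      have hinvol : Function.Involutive (fun p : Vn N × Vn N => (mg t p.1 p.2, mg t p.2 p.1)) := by
        intro p
        exact Prod.ext (mg_invol t p.1 p.2) (mg_invol t p.2 p.1)
      have := Equiv.sum_comp hinvol.toPerm (fun p : Vn N × Vn N => (‖v p.1‖ * ‖v p.2‖) ^ 2)
      calc ∑ x : Vn N, ∑ x' : Vn N, (‖v (mg t x x')‖ * ‖v (mg t x' x)‖) ^ 2
          = ∑ p : Vn N × Vn N, (‖v ((hinvol.toPerm) p).1‖ * ‖v ((hinvol.toPerm) p).2‖) ^ 2 := by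
            rw [Fintype.sum_prod_type]
            simp only [Function.Involutive.coe_toPerm]
        _ = ∑ p : Vn N × Vn N, (‖v p.1‖ * ‖v p.2‖) ^ 2 := this
        _ = ∑ x : Vn N, ∑ x' : Vn N, (‖v x‖ * ‖v x'‖) ^ 2 := Fintype.sum_prod_type _
        _ = 1 := hsq1
    calc (∑ x : Vn N, ∑ x' : Vn N,
        conj (v x) * v (mg t x x') * (conj (v x') * v (mg t x' x))).re
        ≤ ∑ x : Vn N, ∑ x' : Vn N, ‖v x‖ * ‖v (mg t x x')‖ * (‖v x'‖ * ‖v (mg t x' x)‖) := h1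
      _ ≤ ∑ x : Vn N, ∑ x' : Vn N,
            ((‖v x‖ * ‖v x'‖) ^ 2 + (‖v (mg t x x')‖ * ‖v (mg t x' x)‖) ^ 2) / 2 :=
          Finset.sum_le_sum fun x _ => Finset.sum_le_sum fun x' _ => h2 x x'
      _ = 1 := by
          have e : (∑ x : Vn N, ∑ x' : Vn N,
              ((‖v x‖ * ‖v x'‖) ^ 2 + (‖v (mg t x x')‖ * ‖v (mg t x' x)‖) ^ 2) / 2)
              = ((∑ x : Vn N, ∑ x' : Vn N, (‖v x‖ * ‖v x'‖) ^ 2)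
                  + ∑ x : Vn N, ∑ x' : Vn N, (‖v (mg t x x')‖ * ‖v (mg t x' x)‖) ^ 2) / 2 := by
            calc (∑ x : Vn N, ∑ x' : Vn N,
                    ((‖v x‖ * ‖v x'‖) ^ 2 + (‖v (mg t x x')‖ * ‖v (mg t x' x)‖) ^ 2) / 2)
                = ∑ x : Vn N, ((∑ x' : Vn N, (‖v x‖ * ‖v x'‖) ^ 2)
                    + ∑ x' : Vn N, (‖v (mg t x x')‖ * ‖v (mg t x' x)‖) ^ 2) / 2 :=
                  Finset.sum_congr rfl fun x _ => by
                    rw [← Finset.sum_div, Finset.sum_add_distrib]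
              _ = _ := by rw [← Finset.sum_div, Finset.sum_add_distrib]
          rw [e, hsq1, hsq2]; norm_num
  calc (∑ t ∈ (Finset.univ : Finset (Fin N)).powerset, (∑ x : Vn N, ∑ x' : Vn N,
        conj (v x) * v (mg t x x') * (conj (v x') * v (mg t x' x))).re)
      ≤ ∑ t ∈ (Finset.univ : Finset (Fin N)).powerset, (1 : ℝ) :=
        Finset.sum_le_sum hbound
    _ = 2 ^ N := by
        rw [Finset.sum_const, Finset.card_powerset, Finset.card_univ, Fintype.card_fin]
        simp


/-- For any nonempty subset `T ⊆ S` and any orthonormal basis `{|j⟩}` of `(ℂ²)^{⊗N}`, the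
average over `|ψ⟩ ∈ T` of `Σ_j |⟨j|ψ⟩|⁴` is at most `(6^N/|T|)·(2/3)^N = 4^N/|T|`.
In particular, if `|T| ≥ 6^{N(1−δ)}` with constant `δ > 0` satisfying `(2/3)·6^δ < 1`,
then the average is at most `((2/3)·6^δ)^N`. -/
theorem average_inverse_effective_dimension_over_subset_le (N : ℕ)
    (T : Finset (Fin N → Fin 6)) (hT : T.Nonempty)
    (b : (Fin N → Fin 2) → ((Fin N → Fin 2) → ℂ))
    (hb : ∀ j k, star (b j) ⬝ᵥ b k = if j = k then 1 else 0) :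
    (T.card : ℝ)⁻¹ * (∑ f ∈ T, ∑ j : Fin N → Fin 2, ‖star (b j) ⬝ᵥ prodState f‖ ^ 4)
        ≤ (4 : ℝ) ^ N / T.card ∧
      ∀ δ : ℝ, 0 < δ → (2 / 3 : ℝ) * (6 : ℝ) ^ δ < 1 →
        (6 : ℝ) ^ ((N : ℝ) * (1 - δ)) ≤ T.card →
        (T.card : ℝ)⁻¹ * (∑ f ∈ T, ∑ j : Fin N → Fin 2, ‖star (b j) ⬝ᵥ prodState f‖ ^ 4)
          ≤ ((2 / 3 : ℝ) * (6 : ℝ) ^ δ) ^ N := by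
  classical
  have hcard0 : (0:ℝ) < T.card := by exact_mod_cast Finset.card_pos.mpr hT
  have hunit : ∀ j : Fin N → Fin 2, ∑ x, ‖b j x‖ ^ 2 = 1 := by
    intro j
    have h := hb j j
    rw [if_pos rfl] at h
    have h2 : ((∑ x, ‖b j x‖ ^ 2 : ℝ) : ℂ) = 1 := by
      rw [← h]
      simp only [dotProduct, Pi.star_apply, Complex.star_def]
      push_cast
      refine Finset.sum_congr rfl fun x _ => ?_
      rw [mul_comm, Complex.mul_conj, Complex.normSq_eq_norm_sq]
      push_cast
      ring
    exact_mod_cast h2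
  have dotexp : ∀ (j : Fin N → Fin 2) (f : Fin N → Fin 6),
      star (b j) ⬝ᵥ prodState f = ∑ x, conj (b j x) * prodState f x := by
    intro j f
    simp [dotProduct, Complex.star_def]
  have hmain : (∑ f ∈ T, ∑ j : Fin N → Fin 2, ‖star (b j) ⬝ᵥ prodState f‖ ^ 4)
      ≤ (4:ℝ) ^ N := by
    calc (∑ f ∈ T, ∑ j : Fin N → Fin 2, ‖star (b j) ⬝ᵥ prodState f‖ ^ 4)
        ≤ ∑ f : Fin N → Fin 6, ∑ j : Fin N → Fin 2, ‖star (b j) ⬝ᵥ prodState f‖ ^ 4 :=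
          Finset.sum_le_sum_of_subset_of_nonneg (Finset.subset_univ T)
            (fun f _ _ => Finset.sum_nonneg fun j _ => by positivity)
      _ = ∑ j : Fin N → Fin 2, ∑ f : Fin N → Fin 6, ‖star (b j) ⬝ᵥ prodState f‖ ^ 4 :=
          Finset.sum_comm
      _ ≤ ∑ _j : Fin N → Fin 2, (2:ℝ) ^ N := by
          refine Finset.sum_le_sum fun j _ => ?_
          have hc := core N (b j) (hunit j)
          calc (∑ f : Fin N → Fin 6, ‖star (b j) ⬝ᵥ prodState f‖ ^ 4)
              = ∑ f : Fin N → Fin 6, ‖∑ x, conj (b j x) * prodState f x‖ ^ 4 :=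
                Finset.sum_congr rfl fun f _ => by rw [dotexp]
            _ ≤ 2 ^ N := hc
      _ = (4:ℝ) ^ N := by
          rw [Finset.sum_const, Finset.card_univ]
          simp only [Fintype.card_fun, Fintype.card_fin, nsmul_eq_mul]
          push_cast
          rw [← mul_pow]
          norm_num
  have first : (T.card : ℝ)⁻¹ * (∑ f ∈ T, ∑ j : Fin N → Fin 2, ‖star (b j) ⬝ᵥ prodState f‖ ^ 4)
      ≤ (4 : ℝ) ^ N / T.card := by
    rw [div_eq_mul_inv, mul_comm ((4:ℝ)^N)]
    exact mul_le_mul_of_nonneg_left hmain (by positivity)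
  refine ⟨first, fun δ hδ _ hTc => ?_⟩
  have h6 : (0:ℝ) < (6:ℝ) ^ ((N:ℝ) * (1-δ)) := Real.rpow_pos_of_pos (by norm_num) _
  have hle : (4:ℝ) ^ N / (T.card:ℝ) ≤ (4:ℝ) ^ N / (6:ℝ) ^ ((N:ℝ) * (1-δ)) :=
    div_le_div_of_nonneg_left (by positivity) h6 hTc
  have heq : (4:ℝ) ^ N / (6:ℝ) ^ ((N:ℝ) * (1-δ)) = ((2/3 : ℝ) * (6:ℝ) ^ δ) ^ N := by
    rw [div_eq_iff (ne_of_gt h6)]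
    rw [mul_comm (N:ℝ) (1-δ), Real.rpow_mul (by norm_num : (0:ℝ) ≤ 6), Real.rpow_natCast,
      ← mul_pow]
    congr 1
    rw [mul_assoc, ← Real.rpow_add (by norm_num : (0:ℝ) < 6),
      show δ + (1-δ) = 1 by ring, Real.rpow_one]
    norm_num
  exact first.trans (hle.trans_eq heq)
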